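/- Let (I_a)_{a∈A} be finitely many mutually independent Bernoulli indicator variables with X = Σ_a I_a and λ = E(X). If each P(I_a=1) ≤ ε with λε ≤ δ, then for every fixed k, |P(X=k) − e^{−λ} λ^k / k!| is bounded by an explicit error term tending to 0 as ε, δ, and (Σ_a P(I_a=1)²)/λ² tend to 0. -/

import Mathlib

open Finset

private lemma pa_pow_add_est {x y : ℝ} (hx : 0 ≤ x) (hy : 0 ≤ y) :
    ∀ k : ℕ, x ^ (k+1) + (k+1 : ℝ) * x ^ k * y ≤ (x + y) ^ (k+1) := by
  intro k
  induction k with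
  | zero => simp
  | succ k ih =>
    have hxk : (0:ℝ) ≤ x ^ k := pow_nonneg hx k
    have hk : (0:ℝ) ≤ (k:ℝ) := Nat.cast_nonneg k
    have key : x ^ (k+1+1) + ((k:ℝ)+1+1) * x ^ (k+1) * y
        ≤ (x + y) * (x ^ (k+1) + ((k:ℝ)+1) * x ^ k * y) := by
      have h1 : x ^ (k+1) = x * x ^ k := by ring
      have h2 : x ^ (k+1+1) = x * x * x ^ k := by ring
      rw [h1, h2]
      nlinarith [mul_nonneg (mul_nonneg hk hxk) (mul_self_nonneg y),
        mul_nonneg hxk (mul_self_nonneg y)]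
    have key2 : (x + y) * (x ^ (k+1) + ((k:ℝ)+1) * x ^ k * y)
        ≤ (x + y) * (x + y) ^ (k+1) :=
      mul_le_mul_of_nonneg_left ih (by linarith)
    push_cast
    calc x ^ (k+1+1) + ((k:ℝ)+1+1) * x ^ (k+1) * y
        ≤ (x + y) * (x + y) ^ (k+1) := le_trans key key2
      _ = (x + y) ^ (k+1+1) := by ring

private lemma pa_pow_add_rem {x y : ℝ} (hx : 0 ≤ x) (hy : 0 ≤ y) :
    ∀ k : ℕ, (x + y) ^ (k+2) ≤ x ^ (k+2) + ((k:ℝ)+2) * x ^ (k+1) * y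
      + ((k:ℝ)+2) * ((k:ℝ)+1) / 2 * y ^ 2 * (x + y) ^ k := by
  intro k
  induction k with
  | zero => simp; nlinarith
  | succ k ih =>
    have hxy : (0:ℝ) ≤ x + y := by linarith
    have hk : (0:ℝ) ≤ (k:ℝ) := Nat.cast_nonneg k
    have hpow : x ^ (k+1) ≤ (x + y) ^ (k+1) := pow_le_pow_left₀ hx (by linarith) _
    have step : (x + y) ^ (k+1+2) ≤ (x + y) *
        (x ^ (k+2) + ((k:ℝ)+2) * x ^ (k+1) * y + ((k:ℝ)+2) * ((k:ℝ)+1) / 2 * y ^ 2 * (x + y) ^ k) := by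
      calc (x + y) ^ (k+1+2) = (x + y) * (x + y) ^ (k+2) := by ring
        _ ≤ _ := mul_le_mul_of_nonneg_left ih hxy
    refine step.trans ?_
    have expand : (x + y) * (x ^ (k+2) + ((k:ℝ)+2) * x ^ (k+1) * y
          + ((k:ℝ)+2) * ((k:ℝ)+1) / 2 * y ^ 2 * (x + y) ^ k)
        = x ^ (k+3) + ((k:ℝ)+3) * x ^ (k+2) * y
          + (((k:ℝ)+2) * x ^ (k+1) * y ^ 2 + ((k:ℝ)+2) * ((k:ℝ)+1) / 2 * y ^ 2 * (x + y) ^ (k+1)) := by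
      ring
    have bnd : ((k:ℝ)+2) * x ^ (k+1) * y ^ 2 + ((k:ℝ)+2) * ((k:ℝ)+1) / 2 * y ^ 2 * (x + y) ^ (k+1)
        ≤ ((k:ℝ)+3) * ((k:ℝ)+2) / 2 * y ^ 2 * (x + y) ^ (k+1) := by
      have h1 : ((k:ℝ)+2) * x ^ (k+1) * y ^ 2 ≤ ((k:ℝ)+2) * (x + y) ^ (k+1) * y ^ 2 := by
        apply mul_le_mul_of_nonneg_right _ (sq_nonneg y)
        exact mul_le_mul_of_nonneg_left hpow (by linarith)
      nlinarith [sq_nonneg y, pow_nonneg hxy (k+1)]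
    rw [expand]
    push_cast
    have : x ^ (k+3) = x ^ (k+1+2) := by norm_num
    rw [this] at *
    linarith [bnd]

private lemma pa_esymm_nonneg {A : Type*} [DecidableEq A] (p : A → ℝ) (hp : ∀ a, 0 ≤ p a)
    (s : Finset A) (k : ℕ) :
    0 ≤ ∑ t ∈ s.powersetCard k, ∏ b ∈ t, p b :=
  sum_nonneg fun _ _ => prod_nonneg fun b _ => hp b

private lemma pa_esymm_one {A : Type*} [DecidableEq A] (p : A → ℝ) (s : Finset A) :
    ∑ t ∈ s.powersetCard 1, ∏ b ∈ t, p b = ∑ a ∈ s, p a := by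
  rw [powersetCard_one, sum_map]
  simp

private lemma pa_esymm_rec {A : Type*} [DecidableEq A] (p : A → ℝ) {a : A} {s : Finset A}
    (ha : a ∉ s) (k : ℕ) :
    ∑ t ∈ (insert a s).powersetCard (k+1), ∏ b ∈ t, p b
      = (∑ t ∈ s.powersetCard (k+1), ∏ b ∈ t, p b)
        + p a * ∑ t ∈ s.powersetCard k, ∏ b ∈ t, p b := by
  rw [powersetCard_succ_insert ha, sum_union, sum_image, mul_sum]
  · congr 1
    refine sum_congr rfl fun t ht => ?_
    have hat : a ∉ t := fun hat => ha ((mem_powersetCard.mp ht).1 hat)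
    rw [prod_insert hat]
  · intro t ht u hu htu
    have hat : a ∉ t := fun h => ha ((mem_powersetCard.mp ht).1 h)
    have hau : a ∉ u := fun h => ha ((mem_powersetCard.mp hu).1 h)
    have := congrArg (Finset.erase · a) htu
    simpa [erase_insert hat, erase_insert hau] using this
  · rw [disjoint_right]
    intro t ht ht'
    simp only [mem_image] at ht
    obtain ⟨u, hu, rfl⟩ := ht
    exact ha ((mem_powersetCard.mp ht').1 (mem_insert_self a u))

private lemma pa_esymm_le {A : Type*} [DecidableEq A] (p : A → ℝ) (hp : ∀ a, 0 ≤ p a)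
    (s : Finset A) :
    ∀ k : ℕ, ∑ t ∈ s.powersetCard k, ∏ b ∈ t, p b
      ≤ (∑ a ∈ s, p a) ^ k / (k.factorial : ℝ) := by
  induction s using Finset.induction_on with
  | empty =>
    intro k
    cases k with
    | zero => simp
    | succ k =>
      rw [powersetCard_eq_empty.mpr (by simp)]
      simp [zero_pow (Nat.succ_ne_zero k)]
  | @insert a s ha ih =>
    intro k
    have hP : 0 ≤ p a := hp a
    have hL : 0 ≤ ∑ b ∈ s, p b := sum_nonneg fun b _ => hp b
    cases k with
    | zero => simp
    | succ k =>
      rw [pa_esymm_rec p ha, sum_insert ha]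
      have hfac : (0:ℝ) < (k.factorial : ℝ) := by exact_mod_cast k.factorial_pos
      have hfac1 : ((k+1).factorial : ℝ) = ((k:ℝ)+1) * (k.factorial : ℝ) := by
        rw [Nat.factorial_succ]; push_cast; ring
      have est := pa_pow_add_est hL hP k
      set L := ∑ b ∈ s, p b
      calc (∑ t ∈ s.powersetCard (k+1), ∏ b ∈ t, p b)
            + p a * ∑ t ∈ s.powersetCard k, ∏ b ∈ t, p b
          ≤ L ^ (k+1) / ((k+1).factorial : ℝ) + p a * (L ^ k / (k.factorial : ℝ)) := by
            have h2 := mul_le_mul_of_nonneg_left (ih k) hP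
            have h1 := ih (k+1)
            linarith
        _ ≤ (p a + L) ^ (k+1) / ((k+1).factorial : ℝ) := by
            rw [div_add' _ _ _ (ne_of_gt (by positivity)),
              div_le_div_iff₀ (by positivity) (by positivity)]
            rw [hfac1]
            have : L ^ (k + 1) + p a * (L ^ k / (k.factorial:ℝ)) * (((k:ℝ) + 1) * (k.factorial:ℝ))
                = L ^ (k+1) + ((k:ℝ)+1) * L ^ k * p a := by field_simp
            rw [add_comm (p a) L]
            nlinarith [mul_le_mul_of_nonneg_right est
              (le_of_lt (by positivity : (0:ℝ) < ((k:ℝ)+1) * (k.factorial:ℝ)))]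

private lemma pa_esymm_lb {A : Type*} [DecidableEq A] (p : A → ℝ) (hp : ∀ a, 0 ≤ p a)
    (s : Finset A) :
    ∀ k : ℕ, (∑ a ∈ s, p a) ^ k / (k.factorial : ℝ)
        - ∑ t ∈ s.powersetCard k, ∏ b ∈ t, p b
      ≤ (∑ a ∈ s, p a) ^ (k - 2) * ∑ a ∈ s, (p a) ^ 2 := by
  induction s using Finset.induction_on with
  | empty =>
    intro k
    cases k with
    | zero => simp
    | succ k =>
      rw [powersetCard_eq_empty.mpr (by simp)]
      simp [zero_pow (Nat.succ_ne_zero k)]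
  | @insert a s ha ih =>
    intro k
    have hP : 0 ≤ p a := hp a
    have hL : 0 ≤ ∑ b ∈ s, p b := sum_nonneg fun b _ => hp b
    have hT : 0 ≤ ∑ b ∈ s, (p b) ^ 2 := sum_nonneg fun b _ => sq_nonneg _
    have hT' : 0 ≤ ∑ b ∈ insert a s, (p b) ^ 2 := sum_nonneg fun b _ => sq_nonneg _
    have hL' : 0 ≤ ∑ b ∈ insert a s, p b := sum_nonneg fun b _ => hp b
    match k with
    | 0 => simpa using hT'
    | 1 =>
      rw [pa_esymm_one]
      simpa using hT'
    | 2 =>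
      rw [pa_esymm_rec p ha, pa_esymm_one, sum_insert ha, sum_insert ha]
      have ih2 := ih 2
      norm_num at ih2 ⊢
      nlinarith [sq_nonneg (p a)]
    | (m+3) =>
      rw [pa_esymm_rec p ha, sum_insert ha, sum_insert ha]
      set L := ∑ b ∈ s, p b with hLdef
      set T := ∑ b ∈ s, (p b) ^ 2 with hTdef
      set P := p a
      have ih3 := ih (m+3)
      have ih2 := ih (m+2)
      simp only [show m+3-2 = m+1 from rfl, show m+2-2 = m from rfl] at ih3 ih2 ⊢
      have rem := pa_pow_add_rem hL hP (m+1)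
      have est := pa_pow_add_est hL hP m
      have hF1 : (0:ℝ) < ((m+1).factorial : ℝ) := by exact_mod_cast (m+1).factorial_pos
      have hF2 : ((m+2).factorial : ℝ) = ((m:ℝ)+2) * ((m+1).factorial : ℝ) := by
        rw [show m+2 = (m+1)+1 from rfl, Nat.factorial_succ]; push_cast; ring
      have hF3 : ((m+3).factorial : ℝ) = ((m:ℝ)+3) * ((m+2).factorial : ℝ) := by
        rw [show m+3 = (m+2)+1 from rfl, Nat.factorial_succ]; push_cast; ring
      have hF2pos : (0:ℝ) < ((m+2).factorial : ℝ) := by exact_mod_cast (m+2).factorial_pos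
      have hF3pos : (0:ℝ) < ((m+3).factorial : ℝ) := by exact_mod_cast (m+3).factorial_pos
      have hLP : (0:ℝ) ≤ L + P := by linarith
      have h1 : (L + P) ^ (m+3) / ((m+3).factorial : ℝ)
          ≤ L ^ (m+3) / ((m+3).factorial : ℝ) + P * (L ^ (m+2) / ((m+2).factorial : ℝ))
            + P ^ 2 * (L + P) ^ (m+1) := by
        have key : (L ^ (m+3) + ((m:ℝ)+3) * L ^ (m+2) * P
              + (((m:ℝ)+1)+2) * (((m:ℝ)+1)+1) / 2 * P ^ 2 * (L + P) ^ (m+1)) / ((m+3).factorial : ℝ)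
            = L ^ (m+3) / ((m+3).factorial : ℝ) + P * (L ^ (m+2) / ((m+2).factorial : ℝ))
              + P ^ 2 * (L + P) ^ (m+1) / (2 * ((m+1).factorial : ℝ)) := by
          rw [hF3, hF2]
          field_simp
          ring
        have rem' : (L + P) ^ (m+3) ≤ L ^ (m+3) + ((m:ℝ)+3) * L ^ (m+2) * P
              + (((m:ℝ)+1)+2) * (((m:ℝ)+1)+1) / 2 * P ^ 2 * (L + P) ^ (m+1) := by
          have := rem
          push_cast at this ⊢
          convert this using 2 <;> ring_nf
        refine ((div_le_div_iff_of_pos_right hF3pos).mpr rem').trans ?_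
        rw [key]
        have : P ^ 2 * (L + P) ^ (m+1) / (2 * ((m+1).factorial : ℝ)) ≤ P ^ 2 * (L + P) ^ (m+1) := by
          apply div_le_self (by positivity)
          have : (1:ℝ) ≤ ((m+1).factorial : ℝ) := by exact_mod_cast (m+1).factorial_pos
          linarith
        linarith
      have h2 : L ^ (m+1) + P * L ^ m ≤ (L + P) ^ (m+1) := by
        have hm : (0:ℝ) ≤ (m:ℝ) * L ^ m * P := by positivity
        nlinarith [est]
      have hE2 : P * ((L:ℝ) ^ (m+2) / ((m+2).factorial : ℝ)
            - ∑ t ∈ s.powersetCard (m+2), ∏ b ∈ t, p b)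
          ≤ P * (L ^ m * T) := mul_le_mul_of_nonneg_left ih2 hP
      rw [add_comm P L]
      have c2 : L ^ (m+1) * T + P * (L ^ m * T) ≤ (L + P) ^ (m+1) * T := by
        nlinarith [mul_le_mul_of_nonneg_right h2 hT]
      have c3 : (L + P) ^ (m+1) * T + P ^ 2 * (L + P) ^ (m+1)
          = (L + P) ^ (m+1) * (T + P ^ 2) := by ring
      linarith [ih3, hE2, h1]

private lemma pa_exp_lb {x : ℝ} (hx : 0 ≤ x) (hxc : x ≤ (Real.sqrt 5 - 1) / 2) :
    Real.exp (-(x * (1 + x))) ≤ 1 - x := by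
  have hs5 : Real.sqrt 5 < 2.24 := (Real.sqrt_lt' (by norm_num)).mpr (by norm_num)
  have hx62 : x ≤ 0.62 := by
    have : (Real.sqrt 5 - 1) / 2 ≤ 0.62 := by linarith
    linarith
  set t := x * (1 + x) with ht
  have ht0 : 0 ≤ t := by nlinarith
  have hexp := Real.exp_pos t
  rw [Real.exp_neg, inv_eq_one_div, div_le_iff₀ hexp]
  rcases le_or_gt x (1/2) with hhalf | hhalf
  · have hsum := Real.sum_le_exp_of_nonneg ht0 4
    have hsum' : 1 + t + t ^ 2 / 2 + t ^ 3 / 6 ≤ Real.exp t := by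
      convert hsum using 1
      rw [Finset.sum_range_succ, Finset.sum_range_succ, Finset.sum_range_succ,
        Finset.sum_range_succ]
      simp [Nat.factorial]
    have key : 1 ≤ (1 - x) * (1 + t + t ^ 2 / 2 + t ^ 3 / 6) := by
      rw [ht]
      have h2 : x^2 ≤ 1/4 := by nlinarith
      have h3 : x^3 ≤ 1/8 := by nlinarith
      have h4 : x^4 ≤ 1/16 := by nlinarith
      have h5 : x^5 ≤ 1/32 := by nlinarith
      have h6 : x^6 ≤ 1/64 := by nlinarith
      have h7 : x^7 ≤ 1/128 := by nlinarith
      nlinarith [sq_nonneg x, mul_nonneg (mul_nonneg hx hx) hx]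
    calc (1:ℝ) ≤ (1 - x) * (1 + t + t ^ 2 / 2 + t ^ 3 / 6) := key
      _ ≤ (1 - x) * Real.exp t := by
          apply mul_le_mul_of_nonneg_left hsum' (by linarith)
  · have htan : Real.exp 1 * t ≤ Real.exp t := by
      have h := Real.add_one_le_exp (t - 1)
      calc Real.exp 1 * t = Real.exp 1 * ((t - 1) + 1) := by ring
        _ ≤ Real.exp 1 * Real.exp (t - 1) :=
            mul_le_mul_of_nonneg_left h (le_of_lt (Real.exp_pos 1))
        _ = Real.exp t := by rw [← Real.exp_add]; ring_nf
    have h38 : 3/8 ≤ x - x^3 := by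
      have ha : (0:ℝ) ≤ x - 1/2 := by linarith
      have hb : (0:ℝ) ≤ 3/4 - x/2 - x^2 := by nlinarith
      nlinarith [mul_nonneg ha hb]
    have he : (8:ℝ)/3 ≤ Real.exp 1 := by
      have := Real.exp_one_gt_d9
      linarith
    calc (1:ℝ) = (8/3) * (3/8) := by norm_num
      _ ≤ Real.exp 1 * (x - x^3) := by
          apply mul_le_mul he h38 (by norm_num) (le_of_lt (Real.exp_pos 1))
      _ = (1 - x) * (Real.exp 1 * t) := by rw [ht]; ring
      _ ≤ (1 - x) * Real.exp t := mul_le_mul_of_nonneg_left htan (by linarith)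

private lemma pa_swap_bound {A : Type*} [Fintype A] [DecidableEq A] (p : A → ℝ)
    (hp : ∀ a, 0 ≤ p a) (k : ℕ) :
    ∑ s ∈ powersetCard k (univ : Finset A), (∏ b ∈ s, p b) * (∑ a ∈ s, p a)
      ≤ (∑ a, (p a) ^ 2) * ∑ t ∈ powersetCard (k-1) (univ : Finset A), ∏ b ∈ t, p b := by
  have step0 : ∑ s ∈ powersetCard k (univ : Finset A), (∏ b ∈ s, p b) * (∑ a ∈ s, p a)
      = ∑ s ∈ powersetCard k (univ : Finset A), ∑ a ∈ s, (p a * ∏ b ∈ s, p b) := by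
    refine sum_congr rfl fun s _ => ?_
    rw [mul_comm, sum_mul]
  have step1 : ∑ s ∈ powersetCard k (univ : Finset A), ∑ a ∈ s, (p a * ∏ b ∈ s, p b)
      = ∑ a, ∑ s ∈ (powersetCard k (univ : Finset A)).filter (fun s => a ∈ s),
          (p a * ∏ b ∈ s, p b) := by
    apply sum_comm'
    intro s a
    simp only [mem_filter, mem_univ, true_and, and_true, and_comm]
  rw [step0, step1, sum_mul]
  apply sum_le_sum
  intro a _
  have inner : ∑ s ∈ (powersetCard k (univ : Finset A)).filter (fun s => a ∈ s),
      (p a * ∏ b ∈ s, p b)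
      = (p a) ^ 2 * ∑ s ∈ (powersetCard k (univ : Finset A)).filter (fun s => a ∈ s),
          ∏ b ∈ s.erase a, p b := by
    rw [mul_sum]
    refine sum_congr rfl fun s hs => ?_
    have has : a ∈ s := (mem_filter.mp hs).2
    rw [← Finset.mul_prod_erase s p has]
    ring
  rw [inner]
  apply mul_le_mul_of_nonneg_left _ (sq_nonneg (p a))
  have hinj : ∀ s ∈ (powersetCard k (univ : Finset A)).filter (fun s => a ∈ s),
      ∀ u ∈ (powersetCard k (univ : Finset A)).filter (fun s => a ∈ s),
      s.erase a = u.erase a → s = u := by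
    intro s hs u hu hsu
    have has : a ∈ s := (mem_filter.mp hs).2
    have hau : a ∈ u := (mem_filter.mp hu).2
    rw [← insert_erase has, ← insert_erase hau, hsu]
  have himg : ∑ s ∈ (powersetCard k (univ : Finset A)).filter (fun s => a ∈ s),
        ∏ b ∈ s.erase a, p b
      = ∑ t ∈ ((powersetCard k (univ : Finset A)).filter (fun s => a ∈ s)).image
          (fun s => s.erase a), ∏ b ∈ t, p b := by
    rw [sum_image hinj]
  rw [himg]
  apply sum_le_sum_of_subset_of_nonneg
  · intro t ht
    simp only [mem_image, mem_filter] at ht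
    obtain ⟨s, ⟨hs, has⟩, rfl⟩ := ht
    rw [mem_powersetCard] at hs ⊢
    exact ⟨subset_univ _, by rw [card_erase_of_mem has, hs.2]⟩
  · intro t _ _
    exact prod_nonneg fun b _ => hp b

private lemma pa_exp_shift {L u : ℝ} (hu : 0 ≤ u) (huL : u ≤ L) :
    Real.exp (-(L - u)) ≤ Real.exp (-L) + u := by
  have e1 : Real.exp (-(L-u)) = Real.exp (-L) + Real.exp (-L) * (Real.exp u - 1) := by
    rw [show -(L-u) = -L + u by ring, Real.exp_add]; ring
  have hposu := Real.exp_pos u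
  have hposL := Real.exp_pos (-L)
  have hinv : Real.exp (-u) * Real.exp u = 1 := by rw [← Real.exp_add]; simp
  have h := Real.add_one_le_exp (-u)
  have e2 : Real.exp u - 1 ≤ u * Real.exp u := by nlinarith
  have h5 : Real.exp (u - L) ≤ 1 := Real.exp_le_one_iff.mpr (by linarith)
  have h4 : Real.exp (-L) * (u * Real.exp u) = u * Real.exp (u - L) := by
    rw [Real.exp_sub, Real.exp_neg]
    field_simp
  have h6 : Real.exp (-L) * (Real.exp u - 1) ≤ u * Real.exp (u - L) := by
    rw [← h4]
    exact mul_le_mul_of_nonneg_left e2 hposL.le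
  have h7 : u * Real.exp (u - L) ≤ u := by nlinarith
  rw [e1]
  linarith

private lemma pa_fact_arith (L T δ K : ℝ) (hL0 : 0 ≤ L) (hT0 : 0 ≤ T) (hδ0 : 0 ≤ δ)
    (hTδ : T ≤ δ) (k : ℕ) (hK : K = L ^ k / (k.factorial : ℝ)) :
    T * (L ^ (k-1) / ((k-1).factorial : ℝ)) ≤ K * δ + L ^ (k-2) * T := by
  have hsq : ∀ m : ℕ, ((m:ℝ)+2) ^ 2 ≤ 4 * ((m+2).factorial : ℝ) := by
    intro m
    induction m with
    | zero => norm_num [Nat.factorial]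
    | succ m ih =>
      have h1 : (((m+3).factorial : ℕ) : ℝ) = ((m:ℝ)+3) * ((m+2).factorial : ℝ) := by
        rw [show m+3 = (m+2)+1 from rfl, Nat.factorial_succ]; push_cast; ring
      have hm : (0:ℝ) ≤ (m:ℝ) := Nat.cast_nonneg m
      push_cast
      push_cast at h1 ih
      rw [show ((m:ℝ)+1+2) = (m:ℝ)+3 from by ring]
      have hf2 : (0:ℝ) ≤ ((m+2).factorial : ℝ) := by positivity
      calc ((m:ℝ)+3)^2 ≤ ((m:ℝ)+3) * ((m:ℝ)+2)^2 := by nlinarith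
        _ ≤ ((m:ℝ)+3) * (4 * ((m+2).factorial : ℝ)) := by nlinarith
        _ = 4 * (((m:ℝ)+3) * ((m+2).factorial : ℝ)) := by ring
        _ = 4 * (((m+3).factorial : ℕ) : ℝ) := by rw [h1]
        _ = 4 * (((m+1)+2).factorial : ℝ) := by norm_num
    
  match k with
  | 0 =>
    subst hK
    simp [Nat.factorial]
    nlinarith
  | 1 =>
    subst hK
    simp [Nat.factorial]
    nlinarith [mul_nonneg hL0 hδ0]
  | (m+2) =>
    subst hK
    have hfac2 : (0:ℝ) < ((m+2).factorial : ℝ) := by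
      exact_mod_cast (m+2).factorial_pos
    have hfac1 : (0:ℝ) < ((m+1).factorial : ℝ) := by
      exact_mod_cast (m+1).factorial_pos
    have hff : ((m+2).factorial : ℝ) = ((m:ℝ)+2) * ((m+1).factorial : ℝ) := by
      rw [show m+2 = (m+1)+1 from rfl, Nat.factorial_succ]; push_cast; ring
    have core : L ^ (m+1) / ((m+1).factorial : ℝ)
        ≤ L ^ (m+2) / ((m+2).factorial : ℝ) + L ^ m := by
      rw [div_add' _ _ _ (ne_of_gt hfac2), div_le_div_iff₀ hfac1 hfac2, hff]
      have hsq2 := hsq m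
      have hLm : (0:ℝ) ≤ L ^ m := pow_nonneg hL0 m
      have expand1 : L ^ (m+2) = L^2 * L^m := by ring
      have expand2 : L ^ (m+1) = L * L^m := by ring
      rw [expand1, expand2]
      nlinarith [sq_nonneg (L - ((m:ℝ)+2)/2), mul_nonneg (mul_nonneg hL0 hLm) hfac1.le,
        mul_nonneg hLm hfac1.le, sq_nonneg L,
        mul_nonneg hLm (mul_nonneg hfac1.le hfac1.le)]
    have hsimp2 : (m+2) - 1 = m+1 := rfl
    have hsimp3 : (m+2) - 2 = m := rfl
    rw [hsimp2, hsimp3]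
    have c1 : T * (L ^ (m+1) / ((m+1).factorial : ℝ))
        ≤ T * (L ^ (m+2) / ((m+2).factorial : ℝ) + L ^ m) :=
      mul_le_mul_of_nonneg_left core hT0
    have c2 : T * (L ^ (m+2) / ((m+2).factorial : ℝ))
        ≤ δ * (L ^ (m+2) / ((m+2).factorial : ℝ)) :=
      mul_le_mul_of_nonneg_right hTδ (by positivity)
    nlinarith [c1, c2]

/-- Quantitative Poisson approximation for a sum `X = Σ_a I_a` of finitely many
mutually independent Bernoulli indicators with `P(I_a = 1) = p a ≤ ε` and
`λ = Σ_a p a` with `λ·ε ≤ δ`.  The probability `P(X = k)` (written out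
combinatorially, using independence) differs from `e^{−λ} λ^k / k!` by at most
`(λ^k/k!)·δ + λ^{k−2}·Σ_a p_a²`, an explicit error term tending to `0` as
`ε`, `δ` and `(Σ_a p_a²)/λ²` tend to `0`. -/
theorem poisson_approx {A : Type*} [Fintype A] [DecidableEq A]
    (p : A → ℝ) (ε δ : ℝ) (k : ℕ)
    (hp0 : ∀ a, 0 ≤ p a) (hpε : ∀ a, p a ≤ ε)
    (hε : ε ≤ (Real.sqrt 5 - 1) / 2)
    (hδ : (∑ a, p a) * ε ≤ δ) :
    |(∑ s ∈ Finset.powersetCard k (Finset.univ : Finset A),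
        (∏ a ∈ s, p a) * ∏ a ∈ sᶜ, (1 - p a))
      - Real.exp (-(∑ a, p a)) * (∑ a, p a) ^ k / (k.factorial : ℝ)|
    ≤ (∑ a, p a) ^ k / (k.factorial : ℝ) * δ
      + (∑ a, p a) ^ (k - 2) * ∑ a, (p a) ^ 2 := by
  rcases isEmpty_or_nonempty A with hA | hA
  · -- trivial case: A is empty
    have hu : (univ : Finset A) = ∅ := univ_eq_empty
    have hL : (∑ a, p a) = 0 := by rw [hu]; simp
    have hT : (∑ a, (p a) ^ 2) = 0 := by rw [hu]; simp
    have hδ0 : 0 ≤ δ := by rw [hL] at hδ; linarith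
    rw [hL, hT]
    cases k with
    | zero =>
      rw [hu]
      simp [Real.exp_zero]
      linarith
    | succ k =>
      rw [hu, powersetCard_eq_empty.mpr (by simp)]
      simp [zero_pow (Nat.succ_ne_zero k)]
  · -- main case
    obtain ⟨a₀⟩ := hA
    have hε0 : 0 ≤ ε := le_trans (hp0 a₀) (hpε a₀)
    have hs5 : Real.sqrt 5 < 2.24 := (Real.sqrt_lt' (by norm_num)).mpr (by norm_num)
    have hε62 : ε ≤ 0.62 := by linarith
    have h1p0 : ∀ a, (0:ℝ) ≤ 1 - p a := fun a => by linarith [le_trans (hpε a) hε62]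
    have h1p1 : ∀ a, 1 - p a ≤ 1 := fun a => by linarith [hp0 a]
    have hL0 : 0 ≤ ∑ a, p a := sum_nonneg fun a _ => hp0 a
    have hT0 : 0 ≤ ∑ a, (p a) ^ 2 := sum_nonneg fun a _ => sq_nonneg _
    have hδ2 : ε * (∑ a, p a) ≤ δ := by rw [mul_comm]; exact hδ
    have hδ0 : 0 ≤ δ := le_trans (mul_nonneg hε0 hL0) hδ2
    have hTδ : (∑ a, (p a) ^ 2) ≤ δ := by
      have h : (∑ a, (p a) ^ 2) ≤ ε * (∑ a, p a) := by
        rw [mul_sum]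
        apply sum_le_sum
        intro a _
        rw [sq]
        exact mul_le_mul_of_nonneg_right (hpε a) (hp0 a)
      linarith
    have hK0 : 0 ≤ (∑ a, p a) ^ k / (k.factorial : ℝ) := by positivity
    have hEk : (∑ t ∈ powersetCard k (univ : Finset A), ∏ b ∈ t, p b)
        ≤ (∑ a, p a) ^ k / (k.factorial : ℝ) := pa_esymm_le p hp0 univ k
    have hElb : (∑ a, p a) ^ k / (k.factorial : ℝ)
          - (∑ t ∈ powersetCard k (univ : Finset A), ∏ b ∈ t, p b)
        ≤ (∑ a, p a) ^ (k-2) * ∑ a, (p a) ^ 2 := pa_esymm_lb p hp0 univ k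
    have hE0 : 0 ≤ ∑ t ∈ powersetCard k (univ : Finset A), ∏ b ∈ t, p b :=
      pa_esymm_nonneg p hp0 univ k
    have hexpL1 : Real.exp (-(∑ a, p a)) ≤ 1 := Real.exp_le_one_iff.mpr (by linarith)
    have hexpL0 : (0:ℝ) < Real.exp (-(∑ a, p a)) := Real.exp_pos _
    -- lower bound
    have prodfull : Real.exp (-((1+ε) * ∑ a, p a)) ≤ ∏ a, (1 - p a) := by
      have heq : Real.exp (-((1+ε) * ∑ a, p a)) = ∏ a, Real.exp (-((1+ε) * p a)) := by
        rw [← Real.exp_sum]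
        congr 1
        rw [mul_sum]
        rw [Finset.sum_neg_distrib]
      rw [heq]
      apply prod_le_prod (fun a _ => (Real.exp_pos _).le)
      intro a _
      calc Real.exp (-((1+ε) * p a)) ≤ Real.exp (-(p a * (1 + p a))) := by
            apply Real.exp_le_exp.mpr
            have : p a * (1 + p a) ≤ (1+ε) * p a := by nlinarith [hp0 a, hpε a]
            linarith
        _ ≤ 1 - p a := pa_exp_lb (hp0 a) (le_trans (hpε a) hε)
    have hcompl : ∀ s : Finset A, ∏ a, (1 - p a) ≤ ∏ a ∈ sᶜ, (1 - p a) := by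
      intro s
      rw [← Finset.prod_mul_prod_compl s (fun a => 1 - p a)]
      have h1 : ∏ a ∈ s, (1 - p a) ≤ 1 := prod_le_one (fun a _ => h1p0 a) (fun a _ => h1p1 a)
      have h2 : 0 ≤ ∏ a ∈ sᶜ, (1 - p a) := prod_nonneg fun a _ => h1p0 a
      nlinarith
    have lower1 : (∑ t ∈ powersetCard k (univ : Finset A), ∏ b ∈ t, p b)
          * Real.exp (-((1+ε) * ∑ a, p a))
        ≤ ∑ s ∈ powersetCard k (univ : Finset A), (∏ a ∈ s, p a) * ∏ a ∈ sᶜ, (1 - p a) := by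
      rw [sum_mul]
      apply sum_le_sum
      intro s _
      exact mul_le_mul_of_nonneg_left (le_trans prodfull (hcompl s))
        (prod_nonneg fun b _ => hp0 b)
    have lower2 : (∑ t ∈ powersetCard k (univ : Finset A), ∏ b ∈ t, p b)
            * Real.exp (-(∑ a, p a))
          - ((∑ a, p a) ^ k / (k.factorial : ℝ)) * δ
        ≤ ∑ s ∈ powersetCard k (univ : Finset A), (∏ a ∈ s, p a) * ∏ a ∈ sᶜ, (1 - p a) := by
      have hsplit : Real.exp (-((1+ε) * ∑ a, p a))
          = Real.exp (-(∑ a, p a)) * Real.exp (-(ε * ∑ a, p a)) := by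
        rw [← Real.exp_add]; ring_nf
      have hlin : 1 - ε * (∑ a, p a) ≤ Real.exp (-(ε * ∑ a, p a)) := by
        linarith [Real.add_one_le_exp (-(ε * ∑ a, p a))]
      have hEexp : 0 ≤ (∑ t ∈ powersetCard k (univ : Finset A), ∏ b ∈ t, p b)
          * Real.exp (-(∑ a, p a)) := mul_nonneg hE0 hexpL0.le
      have h1 : (∑ t ∈ powersetCard k (univ : Finset A), ∏ b ∈ t, p b)
            * Real.exp (-(∑ a, p a)) * (1 - ε * ∑ a, p a)
          ≤ (∑ t ∈ powersetCard k (univ : Finset A), ∏ b ∈ t, p b)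
            * Real.exp (-((1+ε) * ∑ a, p a)) := by
        calc (∑ t ∈ powersetCard k (univ : Finset A), ∏ b ∈ t, p b)
              * Real.exp (-(∑ a, p a)) * (1 - ε * ∑ a, p a)
            ≤ (∑ t ∈ powersetCard k (univ : Finset A), ∏ b ∈ t, p b)
              * Real.exp (-(∑ a, p a)) * Real.exp (-(ε * ∑ a, p a)) :=
              mul_le_mul_of_nonneg_left hlin hEexp
          _ = (∑ t ∈ powersetCard k (univ : Finset A), ∏ b ∈ t, p b)
              * Real.exp (-((1+ε) * ∑ a, p a)) := by rw [hsplit, mul_assoc]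
      have h2 : (∑ t ∈ powersetCard k (univ : Finset A), ∏ b ∈ t, p b)
            * Real.exp (-(∑ a, p a)) * (ε * ∑ a, p a)
          ≤ ((∑ a, p a) ^ k / (k.factorial : ℝ)) * δ := by
        apply mul_le_mul _ hδ2 (mul_nonneg hε0 hL0) hK0
        calc (∑ t ∈ powersetCard k (univ : Finset A), ∏ b ∈ t, p b)
              * Real.exp (-(∑ a, p a))
            ≤ (∑ t ∈ powersetCard k (univ : Finset A), ∏ b ∈ t, p b) * 1 :=
              mul_le_mul_of_nonneg_left hexpL1 hE0
          _ = ∑ t ∈ powersetCard k (univ : Finset A), ∏ b ∈ t, p b := mul_one _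
          _ ≤ (∑ a, p a) ^ k / (k.factorial : ℝ) := hEk
      nlinarith [lower1]
    have lowerFinal : Real.exp (-(∑ a, p a)) * ((∑ a, p a) ^ k / (k.factorial : ℝ))
          - ∑ s ∈ powersetCard k (univ : Finset A), (∏ a ∈ s, p a) * ∏ a ∈ sᶜ, (1 - p a)
        ≤ ((∑ a, p a) ^ k / (k.factorial : ℝ)) * δ + (∑ a, p a) ^ (k-2) * ∑ a, (p a) ^ 2 := by
      have h3 : Real.exp (-(∑ a, p a)) * ((∑ a, p a) ^ k / (k.factorial : ℝ)
            - ∑ t ∈ powersetCard k (univ : Finset A), ∏ b ∈ t, p b)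
          ≤ (∑ a, p a) ^ k / (k.factorial : ℝ)
            - ∑ t ∈ powersetCard k (univ : Finset A), ∏ b ∈ t, p b :=
        mul_le_of_le_one_left (by linarith) hexpL1
      nlinarith [lower2, hElb]
    -- upper bound
    have upper1 : (∑ s ∈ powersetCard k (univ : Finset A), (∏ a ∈ s, p a) * ∏ a ∈ sᶜ, (1 - p a))
        ≤ (∑ t ∈ powersetCard k (univ : Finset A), ∏ b ∈ t, p b) * Real.exp (-(∑ a, p a))
          + ∑ s ∈ powersetCard k (univ : Finset A), (∏ b ∈ s, p b) * (∑ a ∈ s, p a) := by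
      rw [sum_mul, ← sum_add_distrib]
      apply sum_le_sum
      intro s _
      have hu : 0 ≤ ∑ a ∈ s, p a := sum_nonneg fun a _ => hp0 a
      have huL : (∑ a ∈ s, p a) ≤ ∑ a, p a :=
        sum_le_sum_of_subset_of_nonneg (subset_univ s) (fun a _ _ => hp0 a)
      have hcpl : ∏ a ∈ sᶜ, (1 - p a) ≤ Real.exp (-(∑ a, p a)) + ∑ a ∈ s, p a := by
        have step1 : ∏ a ∈ sᶜ, (1 - p a) ≤ Real.exp (-(∑ a ∈ sᶜ, p a)) := by
          have heq : Real.exp (-(∑ a ∈ sᶜ, p a)) = ∏ a ∈ sᶜ, Real.exp (-(p a)) := by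
            rw [← Real.exp_sum]
            congr 1
            rw [Finset.sum_neg_distrib]
          rw [heq]
          apply prod_le_prod (fun a _ => h1p0 a)
          intro a _
          linarith [Real.add_one_le_exp (-(p a))]
        have hsum : (∑ a ∈ sᶜ, p a) = (∑ a, p a) - ∑ a ∈ s, p a := by
          rw [← Finset.sum_add_sum_compl s p]; ring
        rw [hsum] at step1
        exact le_trans step1 (pa_exp_shift hu huL)
      calc (∏ a ∈ s, p a) * ∏ a ∈ sᶜ, (1 - p a)
          ≤ (∏ a ∈ s, p a) * (Real.exp (-(∑ a, p a)) + ∑ a ∈ s, p a) :=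
            mul_le_mul_of_nonneg_left hcpl (prod_nonneg fun b _ => hp0 b)
        _ = (∏ b ∈ s, p b) * Real.exp (-(∑ a, p a)) + (∏ b ∈ s, p b) * (∑ a ∈ s, p a) := by
            ring
    have hEk1 : (∑ t ∈ powersetCard (k-1) (univ : Finset A), ∏ b ∈ t, p b)
        ≤ (∑ a, p a) ^ (k-1) / ((k-1).factorial : ℝ) := pa_esymm_le p hp0 univ (k-1)
    have upperFinal : (∑ s ∈ powersetCard k (univ : Finset A),
            (∏ a ∈ s, p a) * ∏ a ∈ sᶜ, (1 - p a))
          - Real.exp (-(∑ a, p a)) * ((∑ a, p a) ^ k / (k.factorial : ℝ))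
        ≤ ((∑ a, p a) ^ k / (k.factorial : ℝ)) * δ + (∑ a, p a) ^ (k-2) * ∑ a, (p a) ^ 2 := by
      have h8 : (∑ t ∈ powersetCard k (univ : Finset A), ∏ b ∈ t, p b)
            * Real.exp (-(∑ a, p a))
          ≤ Real.exp (-(∑ a, p a)) * ((∑ a, p a) ^ k / (k.factorial : ℝ)) := by
        rw [mul_comm]
        exact mul_le_mul_of_nonneg_left hEk hexpL0.le
      have h9 : (∑ a, (p a) ^ 2) * (∑ t ∈ powersetCard (k-1) (univ : Finset A), ∏ b ∈ t, p b)
          ≤ (∑ a, (p a) ^ 2) * ((∑ a, p a) ^ (k-1) / ((k-1).factorial : ℝ)) :=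
        mul_le_mul_of_nonneg_left hEk1 hT0
      have h10 := pa_fact_arith (∑ a, p a) (∑ a, (p a) ^ 2) δ
        ((∑ a, p a) ^ k / (k.factorial : ℝ)) hL0 hT0 hδ0 hTδ k rfl
      have h11 := pa_swap_bound p hp0 k
      linarith [upper1]
    -- combine
    rw [abs_sub_le_iff, mul_div_assoc]
    exact ⟨upperFinal, lowerFinal⟩
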